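/- In the one-relator group G = ⟨a, b | a^{b²} = a·a^{3b}⟩, the identity a³ = ([a, b²])^{b⁻¹} holds, and consequently a^{3^k} ∈ γ_{k+1}(G) for every k ≥ 1 (so a is a generalized 3-torsion element of G). -/

import Mathlib

namespace OneRelatorLCS

open scoped commutatorElement

/-- The relator `(b⁻²ab²)⁻¹ · a · (b⁻¹a³b)` in the free group on `a = of 0`, `b = of 1`,
expressing the relation `a^{b²} = a·a^{3b}` (with `x^y = y⁻¹xy`). -/
def rel : FreeGroup (Fin 2) :=
  ((FreeGroup.of 1)⁻¹ * (FreeGroup.of 1)⁻¹ * FreeGroup.of 0 * FreeGroup.of 1 * FreeGroup.of 1)⁻¹ *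
    FreeGroup.of 0 *
    ((FreeGroup.of 1)⁻¹ * (FreeGroup.of 0) ^ 3 * FreeGroup.of 1)

/-- The one-relator group `G = ⟨a, b | a^{b²} = a·a^{3b}⟩`. -/
abbrev G : Type := PresentedGroup ({rel} : Set (FreeGroup (Fin 2)))

def a : G := PresentedGroup.of 0
def b : G := PresentedGroup.of 1

/-- `[x,y] = x⁻¹y⁻¹xy`. -/
def cmt {H : Type*} [Group H] (x y : H) : H := x⁻¹ * y⁻¹ * x * y

/-! ### General group-theoretic helpers -/

section Helpers

variable {H : Type*} [Group H]

lemma conj_of_commute {c z : H} (h : Commute c z) : z * c * z⁻¹ = c := by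
  rw [← h.eq, mul_inv_cancel_right]

lemma conj_of_commute' {c z : H} (h : Commute c z) : z⁻¹ * c * z = c := by
  rw [mul_assoc, h.eq, ← mul_assoc, inv_mul_cancel, one_mul]

lemma comm_mul_left (x z y : H) : ⁅x * z, y⁆ = x * ⁅z, y⁆ * x⁻¹ * ⁅x, y⁆ := by
  simp only [commutatorElement_def]; group

lemma comm_mul_right (x y w : H) : ⁅x, y * w⁆ = ⁅x, y⁆ * (y * ⁅x, w⁆ * y⁻¹) := by
  simp only [commutatorElement_def]; group

lemma comm_inv_left (x y : H) : ⁅x⁻¹, y⁆ = x⁻¹ * ⁅x, y⁆⁻¹ * x := by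
  simp only [commutatorElement_def]; group

lemma comm_inv_right (x y : H) : ⁅x, y⁻¹⁆ = y⁻¹ * ⁅x, y⁆⁻¹ * y := by
  simp only [commutatorElement_def]; group

lemma comm_self (x : H) : ⁅x, x⁆ = 1 := by
  simp only [commutatorElement_def]; group

/-- If `⁅h,x⁆` commutes with `h`, then `⁅h^3, x⁆ = ⁅h,x⁆^3`. -/
lemma comm_cube (h x : H) (hc : Commute ⁅h, x⁆ h) : ⁅h ^ 3, x⁆ = ⁅h, x⁆ ^ 3 := by
  set c := ⁅h, x⁆ with hcdef
  have e1 : h * x * h⁻¹ = c * x := by rw [hcdef, commutatorElement_def]; group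
  have key1 : h * c * h⁻¹ = c := by rw [← hc.eq, mul_inv_cancel_right]
  have conjmul : ∀ u v : H, h * (u * v) * h⁻¹ = (h * u * h⁻¹) * (h * v * h⁻¹) := fun u v => by
    group
  have e2 : h * (c * x) * h⁻¹ = c * (c * x) := by rw [conjmul, key1, e1]
  have e3 : h * (c * (c * x)) * h⁻¹ = c * (c * (c * x)) := by rw [conjmul, key1, e2]
  have hp3 : h ^ 3 = h * h * h := by rw [pow_succ, pow_succ, pow_one]
  calc ⁅h ^ 3, x⁆ = h * h * h * x * (h * h * h)⁻¹ * x⁻¹ := by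
        rw [commutatorElement_def, hp3]
    _ = h * (h * (h * x * h⁻¹) * h⁻¹) * h⁻¹ * x⁻¹ := by group
    _ = h * (h * (c * x) * h⁻¹) * h⁻¹ * x⁻¹ := by rw [e1]
    _ = h * (c * (c * x)) * h⁻¹ * x⁻¹ := by rw [e2]
    _ = c * (c * (c * x)) * x⁻¹ := by rw [e3]
    _ = c * c * c := by group
    _ = c ^ 3 := by rw [pow_succ, pow_succ, pow_one]

end Helpers

/-! ### Specific facts about `G` -/

lemma rel_eq_one : (PresentedGroup.mk ({rel} : Set (FreeGroup (Fin 2))) rel : G) = 1 :=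
  (QuotientGroup.eq_one_iff _).2 (Subgroup.subset_normalClosure (Set.mem_singleton _))

lemma key : a ^ 3 = b * cmt a (b * b) * b⁻¹ := by
  have h := rel_eq_one
  rw [rel] at h
  simp only [map_mul, map_inv, map_pow] at h
  rw [show ({((FreeGroup.of 1)⁻¹ * (FreeGroup.of 1)⁻¹ * FreeGroup.of 0 * FreeGroup.of 1 * FreeGroup.of 1)⁻¹ * FreeGroup.of 0 * ((FreeGroup.of 1)⁻¹ * (FreeGroup.of 0) ^ 3 * FreeGroup.of 1)} : Set (FreeGroup (Fin 2))) = ({rel} : Set (FreeGroup (Fin 2))) from rfl] at h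
  have ha : (PresentedGroup.mk ({rel} : Set (FreeGroup (Fin 2))) (FreeGroup.of 0) : G) = a := rfl
  have hb : (PresentedGroup.mk ({rel} : Set (FreeGroup (Fin 2))) (FreeGroup.of 1) : G) = b := rfl
  rw [ha, hb] at h
  have h' : b⁻¹ * a ^ 3 * b = a⁻¹ * (b⁻¹ * b⁻¹ * a * b * b) := by
    calc b⁻¹ * a ^ 3 * b
        = (a⁻¹ * (b⁻¹ * b⁻¹ * a * b * b)) *
          ((b⁻¹ * b⁻¹ * a * b * b)⁻¹ * a * (b⁻¹ * a ^ 3 * b)) := by group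
      _ = a⁻¹ * (b⁻¹ * b⁻¹ * a * b * b) := by rw [h, mul_one]
  have h2 : a ^ 3 = b * (a⁻¹ * (b⁻¹ * b⁻¹ * a * b * b)) * b⁻¹ := by
    calc a ^ 3 = b * (b⁻¹ * a ^ 3 * b) * b⁻¹ := by group
      _ = _ := by rw [h']
  rw [h2, cmt]
  simp only [inv_inv, mul_inv_rev, mul_assoc]

lemma a_cube_mem : a ^ 3 ∈ (⊤ : Subgroup G).lowerCentralSeries 1 := by
  have hc : cmt a (b * b) = ⁅a⁻¹, (b * b)⁻¹⁆ := by
    simp only [cmt, commutatorElement_def, inv_inv]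
  have h1 : cmt a (b * b) ∈ (⊤ : Subgroup G).lowerCentralSeries 1 := by
    rw [Subgroup.top_lowerCentralSeries_one, commutator_def, hc]
    exact Subgroup.commutator_mem_commutator (Subgroup.mem_top _) (Subgroup.mem_top _)
  rw [key]
  exact (Subgroup.lowerCentralSeries_normal ⊤ 1).conj_mem _ h1 b

lemma mem_closure_ab (x : G) : x ∈ Subgroup.closure ({a, b} : Set G) := by
  refine PresentedGroup.generated_by _ _ (fun j => ?_) x
  fin_cases j
  · exact Subgroup.subset_closure (Set.mem_insert _ _)
  · exact Subgroup.subset_closure (Set.mem_insert_of_mem _ rfl)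

/-- Elements of `γ_{n+1}` are central modulo `γ_{n+2}`. -/
lemma central_mod {n : ℕ} {g : G} (hg : g ∈ (⊤ : Subgroup G).lowerCentralSeries n) (z : G) :
    Commute (QuotientGroup.mk' ((⊤ : Subgroup G).lowerCentralSeries (n + 1)) g)
      (QuotientGroup.mk' ((⊤ : Subgroup G).lowerCentralSeries (n + 1)) z) := by
  have hm : ⁅g, z⁆ ∈ (⊤ : Subgroup G).lowerCentralSeries (n + 1) :=
    Subgroup.commutator_mem_commutator hg (Subgroup.mem_top z)
  have h1 : (QuotientGroup.mk' ((⊤ : Subgroup G).lowerCentralSeries (n + 1)) ⁅g, z⁆ :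
      G ⧸ (⊤ : Subgroup G).lowerCentralSeries (n + 1)) = 1 := (QuotientGroup.eq_one_iff _).2 hm
  rw [map_commutatorElement] at h1
  exact commutatorElement_eq_one_iff_commute.mp h1

/-- The engine: if cubes of the generating commutators of `γ_{m+2}`-level land in
`γ_{m+3}`... (here: if `⁅p,q⁆^3 ∈ lcs (m+2)` for `p ∈ lcs m`), then every element `g`
of `lcs (m+1)` has `g^3 ∈ lcs (m+2)`. -/
lemma engine (m : ℕ)
    (Hcube : ∀ p ∈ (⊤ : Subgroup G).lowerCentralSeries m, ∀ q : G, ⁅p, q⁆ ^ 3 ∈ (⊤ : Subgroup G).lowerCentralSeries (m + 2)) :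
    ∀ g ∈ (⊤ : Subgroup G).lowerCentralSeries (m + 1), g ^ 3 ∈ (⊤ : Subgroup G).lowerCentralSeries (m + 2) := by
  intro g hg
  set K := (⊤ : Subgroup G).lowerCentralSeries (m + 2) with hK
  let φ := QuotientGroup.mk' K
  suffices hs : (φ g) ^ 3 = 1 by
    rw [← map_pow] at hs
    exact (QuotientGroup.eq_one_iff _).1 hs
  have hg' : g ∈ Subgroup.closure { x : G | ∃ p ∈ (⊤ : Subgroup G).lowerCentralSeries m,
      ∃ q ∈ (⊤ : Subgroup G), p * q * p⁻¹ * q⁻¹ = x } :=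
    (Subgroup.mem_lowerCentralSeries_succ_iff ⊤ m g).mp hg
  clear hg
  induction hg' using Subgroup.closure_induction with
  | mem s hs =>
    obtain ⟨p, hp, q, -, hpq⟩ := hs
    have hsc : s = ⁅p, q⁆ := by rw [← hpq, commutatorElement_def]
    rw [hsc, ← map_pow]
    exact (QuotientGroup.eq_one_iff _).2 (Hcube p hp q)
  | one => simp
  | mul x y hx hy ihx ihy =>
    have hx' : x ∈ (⊤ : Subgroup G).lowerCentralSeries (m + 1) :=
      (Subgroup.mem_lowerCentralSeries_succ_iff ⊤ m x).mpr hx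
    have hcomm : Commute (φ x) (φ y) := central_mod hx' y
    rw [map_mul, hcomm.mul_pow, ihx, ihy, one_mul]
  | inv x hx ihx =>
    rw [map_inv, inv_pow, ihx, inv_one]


/-! ### The base case: cubes of commutators lie in `γ₃ = (⊤ : Subgroup G).lowerCentralSeries 2` -/

lemma central0 (x y z : G) :
    Commute (QuotientGroup.mk' ((⊤ : Subgroup G).lowerCentralSeries 2) ⁅x, y⁆)
      (QuotientGroup.mk' ((⊤ : Subgroup G).lowerCentralSeries 2) z) :=
  central_mod (n := 1) (Subgroup.commutator_mem_commutator (Subgroup.mem_top x)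
    (Subgroup.mem_top y)) z

lemma stepA (y : G) : (QuotientGroup.mk' ((⊤ : Subgroup G).lowerCentralSeries 2) ⁅a, y⁆) ^ 3 = 1 := by
  set φ := QuotientGroup.mk' ((⊤ : Subgroup G).lowerCentralSeries 2) with hφ
  have hc : Commute ⁅φ a, φ y⁆ (φ a) := by
    rw [← map_commutatorElement]; exact central0 a y a
  have h1 : ⁅(φ a) ^ 3, φ y⁆ = ⁅φ a, φ y⁆ ^ 3 := comm_cube _ _ hc
  have h2 : ⁅(φ a) ^ 3, φ y⁆ = 1 := by
    rw [← map_pow, ← map_commutatorElement]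
    exact (QuotientGroup.eq_one_iff _).2
      (Subgroup.commutator_mem_commutator a_cube_mem (Subgroup.mem_top _))
  rw [map_commutatorElement, ← h1, h2]

lemma stepB (y : G) : (QuotientGroup.mk' ((⊤ : Subgroup G).lowerCentralSeries 2) ⁅b, y⁆) ^ 3 = 1 := by
  set φ := QuotientGroup.mk' ((⊤ : Subgroup G).lowerCentralSeries 2) with hφ
  have hy := mem_closure_ab y
  induction hy using Subgroup.closure_induction with
  | mem x hx =>
    rcases hx with hx | hx
    · subst hx
      have h : ⁅b, a⁆ = ⁅a, b⁆⁻¹ := (commutatorElement_inv a b).symm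
      rw [h, map_inv, inv_pow, stepA b, inv_one]
    · rw [Set.mem_singleton_iff] at hx
      subst hx
      rw [comm_self, map_one, one_pow]
  | one => rw [commutatorElement_one_right, map_one, one_pow]
  | mul y w hy hw ihy ihw =>
    rw [comm_mul_right, map_mul, map_mul, map_mul, map_inv,
      conj_of_commute (central0 b w y)]
    have hcomm : Commute (φ ⁅b, y⁆) (φ ⁅b, w⁆) := central0 b y ⁅b, w⁆
    rw [hcomm.mul_pow, ihy, ihw, one_mul]
  | inv y hy ihy =>
    rw [comm_inv_right, map_mul, map_mul, map_inv, map_inv,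
      conj_of_commute' ((central0 b y y).inv_left), inv_pow, ihy, inv_one]

lemma hcube0 (p q : G) : (QuotientGroup.mk' ((⊤ : Subgroup G).lowerCentralSeries 2) ⁅p, q⁆) ^ 3 = 1 := by
  set φ := QuotientGroup.mk' ((⊤ : Subgroup G).lowerCentralSeries 2) with hφ
  have hp := mem_closure_ab p
  induction hp using Subgroup.closure_induction with
  | mem x hx =>
    rcases hx with hx | hx
    · subst hx; exact stepA q
    · rw [Set.mem_singleton_iff] at hx; subst hx; exact stepB q
  | one => rw [commutatorElement_one_left, map_one, one_pow]
  | mul x z hx hz ihx ihz =>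
    rw [comm_mul_left, map_mul, map_mul, map_mul, map_inv,
      conj_of_commute (central0 z q x)]
    have hcomm : Commute (φ ⁅z, q⁆) (φ ⁅x, q⁆) := central0 z q ⁅x, q⁆
    rw [hcomm.mul_pow, ihz, ihx, one_mul]
  | inv x hx ihx =>
    rw [comm_inv_left, map_mul, map_mul, map_inv, map_inv,
      conj_of_commute' ((central0 x q x).inv_left), inv_pow, ihx, inv_one]

/-! ### The main cube lemma and the theorem -/

lemma cube_mem : ∀ k : ℕ, 1 ≤ k → ∀ g ∈ (⊤ : Subgroup G).lowerCentralSeries k,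
    g ^ 3 ∈ (⊤ : Subgroup G).lowerCentralSeries (k + 1) := by
  intro k hk
  induction k, hk using Nat.le_induction with
  | base =>
    refine engine 0 (fun p _ q => ?_)
    have h := hcube0 p q
    rw [← map_pow] at h
    exact (QuotientGroup.eq_one_iff _).1 h
  | succ k hk ih =>
    refine engine k (fun p hp q => ?_)
    set φ := QuotientGroup.mk' ((⊤ : Subgroup G).lowerCentralSeries (k + 2)) with hφ
    have hpq1 : ⁅p, q⁆ ∈ (⊤ : Subgroup G).lowerCentralSeries (k + 1) :=
      Subgroup.commutator_mem_commutator hp (Subgroup.mem_top q)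
    have hc : Commute ⁅φ p, φ q⁆ (φ p) := by
      rw [← map_commutatorElement]; exact central_mod (n := k + 1) hpq1 p
    have h1 : ⁅(φ p) ^ 3, φ q⁆ = ⁅φ p, φ q⁆ ^ 3 := comm_cube _ _ hc
    have hp3 : p ^ 3 ∈ (⊤ : Subgroup G).lowerCentralSeries (k + 1) := ih p hp
    have h2 : ⁅(φ p) ^ 3, φ q⁆ = 1 := by
      rw [← map_pow, ← map_commutatorElement]
      exact (QuotientGroup.eq_one_iff _).2
        (Subgroup.commutator_mem_commutator hp3 (Subgroup.mem_top _))
    have h3 : (φ ⁅p, q⁆) ^ 3 = 1 := by rw [map_commutatorElement, ← h1, h2]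
    rw [← map_pow] at h3
    exact (QuotientGroup.eq_one_iff _).1 h3

/-- In `G = ⟨a, b | a^{b²} = a·a^{3b}⟩` one has `a³ = ([a,b²])^{b⁻¹}`, and
consequently `a^{3^k} ∈ γ_{k+1}(G)` for every `k ≥ 1` (so `a` is a generalized
3-torsion element).  Here `γ_{k+1}(G) = (⊤ : Subgroup G).lowerCentralSeries k` since
`γ_1(G) = G = (⊤ : Subgroup G).lowerCentralSeries 0`. -/
theorem a_is_generalized_three_torsion :
    a ^ 3 = (b⁻¹)⁻¹ * cmt a (b * b) * b⁻¹ ∧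
      ∀ k : ℕ, 1 ≤ k → a ^ (3 ^ k) ∈ (⊤ : Subgroup G).lowerCentralSeries k := by
  constructor
  · rw [inv_inv]; exact key
  · intro k hk
    induction k, hk using Nat.le_induction with
    | base => simpa using a_cube_mem
    | succ k hk ih =>
      have h : a ^ 3 ^ (k + 1) = (a ^ 3 ^ k) ^ 3 := by rw [pow_succ, pow_mul]
      rw [h]
      exact cube_mem k hk _ ih


end OneRelatorLCS
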